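/- Let (S, M) and (B, B ∩ M) be reduced Noetherian local rings with B ⊆ S and \widehat{B} = \widehat{S}, such that f : Spec(S) → Spec(B), f(P) = P ∩ B, is surjective and f(P)S = P for all primes P of S of positive height. Then: (1) if Q is a minimal prime of S, then Q ∩ B is a minimal prime of B; (2) if P₁ ∩ B = P₂ ∩ B for primes P₁, P₂ of S, then either P₁ = P₂ or both P₁ and P₂ are minimal primes of S. -/

import Mathlib

open IsLocalRing

/-- Elements of a minimal prime are zero divisors. -/
lemma aux_zeroDivisor_of_mem_minimalPrimes {R : Type*} [CommRing R] {p : Ideal R}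
    (hp : p ∈ minimalPrimes R) {x : R} (hx : x ∈ p) : ∃ y : R, y ≠ 0 ∧ x * y = 0 := by
  haveI hpp : p.IsPrime := hp.1.1
  have hmem : algebraMap R (Localization p.primeCompl) x ∈
      IsLocalRing.maximalIdeal (Localization p.primeCompl) :=
    (IsLocalization.AtPrime.to_map_mem_maximal_iff _ p x).mpr hx
  have hnil : IsNilpotent (algebraMap R (Localization p.primeCompl) x) := by
    haveI := IsLocalization.subsingleton_primeSpectrum_of_mem_minimalPrimes p hp
      (Localization p.primeCompl)
    rw [← mem_nilradical, nilradical_eq_sInf, Submodule.mem_sInf]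
    intro J hJ
    have : (⟨J, hJ⟩ : PrimeSpectrum (Localization p.primeCompl)) =
        ⟨maximalIdeal _, inferInstance⟩ := Subsingleton.elim _ _
    rw [show J = maximalIdeal _ from congrArg PrimeSpectrum.asIdeal this]
    exact hmem
  obtain ⟨n, hn⟩ := hnil
  rw [← map_pow, IsLocalization.map_eq_zero_iff p.primeCompl] at hn
  obtain ⟨⟨s, hs⟩, hsx⟩ := hn
  have hs' : s ∉ p := hs
  clear hmem hx
  induction n with
  | zero =>
    simp only [pow_zero, mul_one] at hsx
    exact absurd (hsx ▸ p.zero_mem) hs'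
  | succ n ih =>
    by_cases h0 : s * x ^ n = 0
    · exact ih h0
    · exact ⟨s * x ^ n, h0, by rw [← hsx]; ring⟩

/-- A prime consisting of zero divisors in a reduced Noetherian ring is a minimal prime. -/
lemma aux_minimal_of_zeroDivisors {R : Type*} [CommRing R] [IsNoetherianRing R] [IsReduced R]
    {q : Ideal R} (hq : q.IsPrime) (h : ∀ x ∈ q, ∃ y, y ≠ 0 ∧ x * y = 0) :
    q ∈ minimalPrimes R := by
  have hfin := minimalPrimes.finite_of_isNoetherianRing R
  have hsub : (q : Set R) ⊆ ⋃ p ∈ hfin.toFinset, ((id p : Ideal R) : Set R) := by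
    intro x hx
    obtain ⟨y, hy0, hxy⟩ := h x hx
    have hex : ∃ p ∈ minimalPrimes R, y ∉ p := by
      by_contra hc
      push_neg at hc
      have hy : y ∈ sInf (minimalPrimes R) := Submodule.mem_sInf.mpr fun p hp => hc p hp
      rw [show minimalPrimes R = Ideal.minimalPrimes (⊥ : Ideal R) from rfl,
        Ideal.sInf_minimalPrimes] at hy
      obtain ⟨n, hn⟩ := hy
      exact hy0 (IsNilpotent.eq_zero ⟨n, by simpa using hn⟩)
    obtain ⟨p, hp, hyp⟩ := hex
    haveI := hp.1.1
    have hxp : x ∈ p := by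
      rcases hp.1.1.mem_or_mem (show x * y ∈ p from hxy ▸ p.zero_mem) with h' | h'
      · exact h'
      · exact absurd h' hyp
    exact Set.mem_biUnion (hfin.mem_toFinset.mpr hp) hxp
  have := (Ideal.subset_union_prime (s := hfin.toFinset) (f := id) q q
    (fun i hi _ _ => (hfin.mem_toFinset.mp hi).1.1)).mp hsub
  obtain ⟨p, hps, hqp⟩ := this
  have hp := hfin.mem_toFinset.mp hps
  have hpq : p ≤ q := hp.2 ⟨hq, bot_le⟩ hqp
  have : q = p := le_antisymm hqp hpq
  rw [this]
  exact hp

/-- Flat base change preserves regularity of elements. -/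
lemma aux_regular_algebraMap {R A : Type*} [CommRing R] [CommRing A] [Algebra R A]
    [Module.Flat R A] {b : R} (hb : ∀ y : R, b * y = 0 → y = 0) :
    ∀ y : A, algebraMap R A b * y = 0 → y = 0 := by
  have hreg : IsSMulRegular R b := by
    intro y z hyz
    simp only [smul_eq_mul] at hyz
    have := hb (y - z) (by rw [mul_sub, hyz, sub_self])
    exact sub_eq_zero.mp this
  have h2 : IsSMulRegular (TensorProduct R A R) b := IsSMulRegular.lTensor A hreg
  have h3 : IsSMulRegular A b :=
    IsSMulRegular.of_injective ((TensorProduct.rid R A).symm.toLinearMap)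
      (TensorProduct.rid R A).symm.injective h2
  intro y hy
  apply h3
  show b • y = b • 0
  rw [smul_zero, Algebra.smul_def, hy]

/-- The map to the adic completion of a Noetherian local ring is injective. -/
lemma aux_adic_injective (R : Type*) [CommRing R] [IsNoetherianRing R] [IsLocalRing R] :
    Function.Injective (algebraMap R (AdicCompletion (maximalIdeal R) R)) := by
  have h : ∀ b : R, algebraMap R (AdicCompletion (maximalIdeal R) R) b = 0 → b = 0 := by
    intro b hb
    have hmem : ∀ n : ℕ, b ∈ maximalIdeal R ^ n := by
      intro n
      have h1 := congrArg (AdicCompletion.evalₐ (maximalIdeal R) n) hb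
      rw [map_zero, AlgHom.commutes, Ideal.Quotient.algebraMap_eq,
        Ideal.Quotient.eq_zero_iff_mem] at h1
      exact h1
    have hbot : (⨅ n : ℕ, maximalIdeal R ^ n) = ⊥ :=
      Ideal.iInf_pow_eq_bot_of_isLocalRing _ (Ideal.IsMaximal.ne_top inferInstance)
    have : b ∈ (⊥ : Ideal R) := hbot ▸ Submodule.mem_iInf _ |>.mpr hmem
    simpa using this
  intro x y hxy
  have : algebraMap R (AdicCompletion (maximalIdeal R) R) (x - y) = 0 := by
    rw [map_sub, hxy, sub_self]
  exact sub_eq_zero.mp (h _ this)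

/-- The contraction of a minimal prime of the completion is a minimal prime. -/
lemma aux_comap_completion_minimal {R : Type*} [CommRing R] [IsNoetherianRing R]
    [IsLocalRing R] [IsReduced R]
    {q : Ideal (AdicCompletion (maximalIdeal R) R)}
    (hq : q ∈ minimalPrimes (AdicCompletion (maximalIdeal R) R)) :
    q.comap (algebraMap R (AdicCompletion (maximalIdeal R) R)) ∈ minimalPrimes R := by
  haveI := hq.1.1
  haveI : Module.Flat R (AdicCompletion (maximalIdeal R) R) :=
    AdicCompletion.flat_of_isNoetherian (maximalIdeal R)
  have hqp : (q.comap (algebraMap R (AdicCompletion (maximalIdeal R) R))).IsPrime :=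
    Ideal.IsPrime.comap _
  apply aux_minimal_of_zeroDivisors hqp
  intro b hb
  obtain ⟨y, hy0, hxy⟩ := aux_zeroDivisor_of_mem_minimalPrimes hq (Ideal.mem_comap.mp hb)
  by_contra hc
  push_neg at hc
  have hb' : ∀ y : R, b * y = 0 → y = 0 := by
    intro z hz
    by_contra hz0
    exact hc z hz0 hz
  exact hy0 (aux_regular_algebraMap hb' y hxy)

/-- Let `(S, M)` and `(B, B ∩ M)` be reduced Noetherian local rings with
`B ⊆ S` and `B̂ = Ŝ`, such that `f : Spec S → Spec B`, `f(P) = P ∩ B`, is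
surjective and `f(P)S = P` for all primes `P` of `S` of positive height.  Then:
(1) if `Q` is a minimal prime of `S`, then `Q ∩ B` is a minimal prime of `B`;
(2) if `P₁ ∩ B = P₂ ∩ B` for primes `P₁, P₂` of `S`, then either `P₁ = P₂` or
both `P₁` and `P₂` are minimal primes of `S`. -/
theorem comap_minimalPrime_and_comap_eq_cases
    {B S : Type*} [CommRing B] [CommRing S] [Algebra B S]
    [IsNoetherianRing B] [IsNoetherianRing S] [IsLocalRing B] [IsLocalRing S]
    [IsReduced B] [IsReduced S]
    (hinj : Function.Injective (algebraMap B S))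
    (e : AdicCompletion (IsLocalRing.maximalIdeal B) B ≃+*
      AdicCompletion (IsLocalRing.maximalIdeal S) S)
    (he : ∀ b : B,
      e (algebraMap B (AdicCompletion (IsLocalRing.maximalIdeal B) B) b) =
        algebraMap S (AdicCompletion (IsLocalRing.maximalIdeal S) S) (algebraMap B S b))
    (hsurj : ∀ q : Ideal B, q.IsPrime →
      ∃ P : Ideal S, ∃ _ : P.IsPrime, P.comap (algebraMap B S) = q)
    (hext : ∀ P : Ideal S, (hP : P.IsPrime) →
      0 < Order.height (⟨P, hP⟩ : PrimeSpectrum S) →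
      (P.comap (algebraMap B S)).map (algebraMap B S) = P) :
    (∀ Q : Ideal S, Q ∈ minimalPrimes S →
      Q.comap (algebraMap B S) ∈ minimalPrimes B) ∧
    (∀ P₁ P₂ : Ideal S, P₁.IsPrime → P₂.IsPrime →
      P₁.comap (algebraMap B S) = P₂.comap (algebraMap B S) →
      P₁ = P₂ ∨ (P₁ ∈ minimalPrimes S ∧ P₂ ∈ minimalPrimes S)) := by
  set f := algebraMap B S with hf
  set gB := algebraMap B (AdicCompletion (IsLocalRing.maximalIdeal B) B) with hgB
  set gS := algebraMap S (AdicCompletion (IsLocalRing.maximalIdeal S) S) with hgS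
  have hcomm : (e : AdicCompletion (IsLocalRing.maximalIdeal B) B →+*
      AdicCompletion (IsLocalRing.maximalIdeal S) S).comp gB = gS.comp f :=
    RingHom.ext fun b => he b
  -- Part 1
  have part1 : ∀ Q : Ideal S, Q ∈ minimalPrimes S → Q.comap f ∈ minimalPrimes B := by
    intro Q hQ
    haveI hQp : Q.IsPrime := hQ.1.1
    obtain ⟨P', hP', hP'c⟩ :=
      Ideal.exists_comap_eq_of_mem_minimalPrimes_of_injective (aux_adic_injective S) Q hQ
    haveI := hP'
    obtain ⟨Q', hQ', hQ'le⟩ := Ideal.exists_minimalPrimes_le (I := (⊥ : Ideal _)) (J := P') bot_le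
    haveI hQ'p : Q'.IsPrime := hQ'.1.1
    have hcle : Q'.comap gS ≤ Q := hP'c ▸ Ideal.comap_mono hQ'le
    have hceq : Q'.comap gS = Q :=
      le_antisymm hcle (hQ.2 ⟨Ideal.IsPrime.comap _, bot_le⟩ hcle)
    have hbot : (⊥ : Ideal (AdicCompletion (IsLocalRing.maximalIdeal S) S)).comap
        (e : AdicCompletion (IsLocalRing.maximalIdeal B) B →+*
          AdicCompletion (IsLocalRing.maximalIdeal S) S) = ⊥ := by
      ext x
      simp only [Ideal.mem_comap, Ideal.mem_bot]
      exact ⟨fun h => e.injective (by simpa using h), fun h => by simp [h]⟩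
    have hq' : Q'.comap (e : AdicCompletion (IsLocalRing.maximalIdeal B) B →+*
        AdicCompletion (IsLocalRing.maximalIdeal S) S) ∈
        minimalPrimes (AdicCompletion (IsLocalRing.maximalIdeal B) B) := by
      have hes : Function.Surjective
          ⇑(e : AdicCompletion (IsLocalRing.maximalIdeal B) B →+*
            AdicCompletion (IsLocalRing.maximalIdeal S) S) := e.surjective
      have := Ideal.minimal_primes_comap_of_surjective hes (I := (⊥ : Ideal _)) hQ'
      rwa [hbot] at this
    have hkey : Q.comap f = (Q'.comap (e : AdicCompletion (IsLocalRing.maximalIdeal B) B →+*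
        AdicCompletion (IsLocalRing.maximalIdeal S) S)).comap gB := by
      rw [← hceq, Ideal.comap_comap, Ideal.comap_comap, hcomm]
    rw [hkey]
    exact aux_comap_completion_minimal hq'
  -- minimality from height zero
  have hmin0 : ∀ (P : Ideal S) (hP : P.IsPrime),
      ¬ 0 < Order.height (⟨P, hP⟩ : PrimeSpectrum S) → P ∈ minimalPrimes S := by
    intro P hP hh
    have h0 : Order.height (⟨P, hP⟩ : PrimeSpectrum S) = 0 :=
      nonpos_iff_eq_zero.mp (not_lt.mp hh)
    have hm : IsMin (⟨P, hP⟩ : PrimeSpectrum S) := Order.height_eq_zero.mp h0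
    rw [minimalPrimes_eq_minimals]
    refine ⟨hP, fun q hq hle => ?_⟩
    have := hm (show (⟨q, hq⟩ : PrimeSpectrum S) ≤ ⟨P, hP⟩ from
      (PrimeSpectrum.asIdeal_le_asIdeal _ _).mp hle)
    exact (PrimeSpectrum.asIdeal_le_asIdeal _ _).mpr this
  refine ⟨part1, ?_⟩
  intro P₁ P₂ h₁ h₂ hc
  by_cases k₁ : 0 < Order.height (⟨P₁, h₁⟩ : PrimeSpectrum S)
  · left
    have hle : P₁ ≤ P₂ := by
      rw [← hext P₁ h₁ k₁, hc]
      exact Ideal.map_comap_le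
    by_cases k₂ : 0 < Order.height (⟨P₂, h₂⟩ : PrimeSpectrum S)
    · have hle' : P₂ ≤ P₁ := by
        rw [← hext P₂ h₂ k₂, ← hc]
        exact Ideal.map_comap_le
      exact le_antisymm hle hle'
    · have hm := hmin0 P₂ h₂ k₂
      exact le_antisymm hle (hm.2 ⟨h₁, bot_le⟩ hle)
  · by_cases k₂ : 0 < Order.height (⟨P₂, h₂⟩ : PrimeSpectrum S)
    · left
      have hle : P₂ ≤ P₁ := by
        rw [← hext P₂ h₂ k₂, ← hc]
        exact Ideal.map_comap_le
      have hm := hmin0 P₁ h₁ k₁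
      exact le_antisymm (hm.2 ⟨h₂, bot_le⟩ hle) hle
    · exact Or.inr ⟨hmin0 P₁ h₁ k₁, hmin0 P₂ h₂ k₂⟩
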